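/- Let F be a field of characteristic zero and let ℍ(F) be the Hamilton quaternion algebra over F, i.e. the quaternion F-algebra with basis 1, i, j, k and relations i² = j² = −1, ij = −ji = k. Then ℍ(F) is split, i.e. there is an F-algebra isomorphism ℍ(F) ≅ M₂(F), if and only if there exist x, y ∈ F with x² + y² = −1. -/

import Mathlib

open scoped Quaternion

/-- If `p² + q² = 0` with `p ≠ 0`, then `-1` is a square, hence a sum of two squares. -/
lemma aux_pair {F : Type*} [Field F] (p q : F) (h : p ^ 2 + q ^ 2 = 0) (hp : p ≠ 0) :
    ∃ x y : F, x ^ 2 + y ^ 2 = -1 := by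
  refine ⟨q / p, 0, ?_⟩
  field_simp
  linear_combination h

/-- If a nontrivial sum of four squares vanishes, then `-1` is a sum of two squares. -/
lemma aux_four {F : Type*} [Field F] (a b c d : F)
    (h : a ^ 2 + b ^ 2 + c ^ 2 + d ^ 2 = 0)
    (hne : ¬ (a = 0 ∧ b = 0 ∧ c = 0 ∧ d = 0)) :
    ∃ x y : F, x ^ 2 + y ^ 2 = -1 := by
  by_cases hab : a ^ 2 + b ^ 2 = 0
  · by_cases ha : a = 0
    · have hb : b = 0 := by
        have : b ^ 2 = 0 := by simpa [ha] using hab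
        exact pow_eq_zero_iff (n := 2) (by norm_num) |>.mp this
      have hcd : c ^ 2 + d ^ 2 = 0 := by linear_combination h - hab
      by_cases hc : c = 0
      · have hd : d = 0 := by
          have : d ^ 2 = 0 := by simpa [hc] using hcd
          exact pow_eq_zero_iff (n := 2) (by norm_num) |>.mp this
        exact absurd ⟨ha, hb, hc, hd⟩ hne
      · exact aux_pair c d hcd hc
    · exact aux_pair a b hab ha
  · refine ⟨(a * c - b * d) / (a ^ 2 + b ^ 2), (a * d + b * c) / (a ^ 2 + b ^ 2), ?_⟩
    field_simp
    linear_combination (a ^ 2 + b ^ 2) * h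

theorem stmt_5 (F : Type*) [Field F] [CharZero F] :
    Nonempty (ℍ[F] ≃ₐ[F] Matrix (Fin 2) (Fin 2) F) ↔ ∃ x y : F, x ^ 2 + y ^ 2 = -1 := by
  constructor
  · rintro ⟨e⟩
    -- pull back orthogonal idempotents: get zero divisors in ℍ[F]
    set u : ℍ[F] := e.symm (Matrix.single 0 0 1) with hu
    set v : ℍ[F] := e.symm (Matrix.single 1 1 1) with hv
    have hu0 : u ≠ 0 := by
      intro h
      have h2 : (Matrix.single 0 0 1 : Matrix (Fin 2) (Fin 2) F) = 0 :=
        e.symm.injective (h.trans (map_zero _).symm)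
      have := congrFun (congrFun h2 0) 0
      simp [Matrix.single] at this
    have hv0 : v ≠ 0 := by
      intro h
      have h2 : (Matrix.single 1 1 1 : Matrix (Fin 2) (Fin 2) F) = 0 :=
        e.symm.injective (h.trans (map_zero _).symm)
      have := congrFun (congrFun h2 1) 1
      simp [Matrix.single] at this
    have huv : u * v = 0 := by
      have hz : (Matrix.single 0 0 1 : Matrix (Fin 2) (Fin 2) F) *
          Matrix.single 1 1 1 = 0 :=
        Matrix.single_mul_single_of_ne 1 0 0 1 (by decide) 1
      rw [hu, hv, ← map_mul, hz, map_zero]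
    have hnorm : Quaternion.normSq u * Quaternion.normSq v = 0 := by
      rw [← map_mul, huv, map_zero]
    rcases mul_eq_zero.mp hnorm with hn | hn
    · refine aux_four u.re u.imI u.imJ u.imK ?_ ?_
      · rw [← Quaternion.normSq_def']; exact hn
      · rintro ⟨h1, h2, h3, h4⟩
        exact hu0 (QuaternionAlgebra.ext h1 h2 h3 h4)
    · refine aux_four v.re v.imI v.imJ v.imK ?_ ?_
      · rw [← Quaternion.normSq_def']; exact hn
      · rintro ⟨h1, h2, h3, h4⟩
        exact hv0 (QuaternionAlgebra.ext h1 h2 h3 h4)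
  · rintro ⟨x, y, hxy⟩
    -- construct an explicit quaternionic basis of M₂(F)
    have hI : (!![x, y; y, -x] : Matrix (Fin 2) (Fin 2) F) * !![x, y; y, -x]
        = (-1 : F) • 1 := by
      ext i j
      fin_cases i <;> fin_cases j <;>
        simp [Matrix.mul_apply, Fin.sum_univ_two, Matrix.one_apply] <;>
        first
        | linear_combination hxy
        | ring
    have hJ : (!![0, 1; -1, 0] : Matrix (Fin 2) (Fin 2) F) * !![0, 1; -1, 0]
        = (-1 : F) • 1 := by
      ext i j
      fin_cases i <;> fin_cases j <;>
        simp [Matrix.mul_apply, Fin.sum_univ_two, Matrix.one_apply]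
    have hIJ : (!![x, y; y, -x] : Matrix (Fin 2) (Fin 2) F) * !![0, 1; -1, 0]
        = !![-y, x; x, y] := by
      ext i j
      fin_cases i <;> fin_cases j <;>
        simp [Matrix.mul_apply, Fin.sum_univ_two]
    have hJI : (!![0, 1; -1, 0] : Matrix (Fin 2) (Fin 2) F) * !![x, y; y, -x]
        = -(!![-y, x; x, y]) := by
      ext i j
      fin_cases i <;> fin_cases j <;>
        simp [Matrix.mul_apply, Fin.sum_univ_two]
    let basis : QuaternionAlgebra.Basis (Matrix (Fin 2) (Fin 2) F) (-1 : F) (0 : F) (-1 : F) :=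
      ⟨!![x, y; y, -x], !![0, 1; -1, 0], !![-y, x; x, y], by rw [hI]; simp, hJ, hIJ, by rw [hJI]; simp⟩
    let φ : ℍ[F] →ₐ[F] Matrix (Fin 2) (Fin 2) F := basis.liftHom
    have hinj : Function.Injective φ := by
      rw [injective_iff_map_eq_zero]
      intro q hq
      have hl : (algebraMap F (Matrix (Fin 2) (Fin 2) F)) q.re
          + q.imI • !![x, y; y, -x] + q.imJ • !![0, 1; -1, 0]
          + q.imK • !![-y, x; x, y] = 0 := hq
      have h00 := congrFun (congrFun hl 0) 0
      have h01 := congrFun (congrFun hl 0) 1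
      have h10 := congrFun (congrFun hl 1) 0
      have h11 := congrFun (congrFun hl 1) 1
      simp [Matrix.algebraMap_matrix_apply] at h00 h01 h10 h11
      have ha : q.re = 0 := by linear_combination (h00 + h11) / 2
      have hc : q.imJ = 0 := by linear_combination (h01 - h10) / 2
      have hb : q.imI = 0 := by
        linear_combination (-x / 2) * h00 + (x / 2) * h11 - (y / 2) * h01 - (y / 2) * h10
          + q.imI * hxy
      have hd : q.imK = 0 := by
        linear_combination (y / 2) * h00 - (y / 2) * h11 - (x / 2) * h01 - (x / 2) * h10
          + q.imK * hxy
      exact QuaternionAlgebra.ext ha hb hc hd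
    have hbij : Function.Bijective φ := by
      refine ⟨hinj, ?_⟩
      have hfr : Module.finrank F ℍ[F] = Module.finrank F (Matrix (Fin 2) (Fin 2) F) := by
        rw [Quaternion.finrank_eq_four, Module.finrank_matrix]
        simp
      exact (LinearMap.injective_iff_surjective_of_finrank_eq_finrank
        (f := φ.toLinearMap) hfr).mp hinj
    exact ⟨AlgEquiv.ofBijective φ hbij⟩
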